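/- arXiv:2002.07729 — 5 statements merged into one kernel-verified Lean document; each statement's English description precedes it below -/
import Mathlib

section
/- Let M ≥ 1, let θ* ∈ ℝ, and let θ̂, θ̄, b, cnf : {1,…,M} → ℝ satisfy: (i) |θ̄(i) − θ*| ≤ b(i) for all i; (ii) |θ̂(i) − θ̄(i)| ≤ cnf(i) for all i; (iii) b is monotonically nondecreasing; (iv) for some κ ∈ (0,1], κ·cnf(i) ≤ cnf(i+1) ≤ cnf(i) for all i ∈ {1,…,M−1}; and (v) cnf(i) ≥ 0 for all i. Define the intervals I(i) := [θ̂(i) − 2cnf(i), θ̂(i) + 2cnf(i)] and the index î := max{ i ∈ {1,…,M} : ⋂_{j=1}^{i} I(j) ≠ ∅ }. Then |θ̂(î) − θ*| ≤ 6(1 + κ⁻¹) · min_{i ∈ {1,…,M}} ( b(i) + cnf(i) ). -/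
/-- **SLOPE oracle inequality (deterministic core).**
Given candidate estimates `θhat i`, their means `θbar i`, a valid nondecreasing bias
bound `b`, and a valid nonnegative confidence bound `cnf` with geometric decay constant
`κ ∈ (0,1]`, the Lepski-selected index `ihat` (the largest index whose prefix of intervals
`I(j) = [θhat j − 2 cnf j, θhat j + 2 cnf j]` has a common point) satisfies
`|θhat ihat − θstar| ≤ 6 (1 + κ⁻¹) min_i (b i + cnf i)`. -/
theorem slope_oracle_inequality
    (M : ℕ) (hM : 1 ≤ M) (θstar : ℝ) (θhat θbar b cnf : ℕ → ℝ) (κ : ℝ)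
    (hκ0 : 0 < κ) (hκ1 : κ ≤ 1)
    (hbias : ∀ i ∈ Finset.Icc 1 M, |θbar i - θstar| ≤ b i)
    (hconf : ∀ i ∈ Finset.Icc 1 M, |θhat i - θbar i| ≤ cnf i)
    (hb_mono : ∀ i ∈ Finset.Icc 1 (M - 1), b i ≤ b (i + 1))
    (hcnf_mono : ∀ i ∈ Finset.Icc 1 (M - 1),
      κ * cnf i ≤ cnf (i + 1) ∧ cnf (i + 1) ≤ cnf i)
    (hcnf_nonneg : ∀ i ∈ Finset.Icc 1 M, 0 ≤ cnf i)
    (ihat : ℕ) (hihat_mem : ihat ∈ Finset.Icc 1 M)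
    (hihat_nonempty :
      (⋂ j ∈ Finset.Icc 1 ihat,
        Set.Icc (θhat j - 2 * cnf j) (θhat j + 2 * cnf j)).Nonempty)
    (hihat_max : ∀ i ∈ Finset.Icc 1 M,
      (⋂ j ∈ Finset.Icc 1 i,
        Set.Icc (θhat j - 2 * cnf j) (θhat j + 2 * cnf j)).Nonempty → i ≤ ihat) :
    ∀ i ∈ Finset.Icc 1 M,
      |θhat ihat - θstar| ≤ 6 * (1 + κ⁻¹) * (b i + cnf i) := by
  have hκinv : 1 ≤ κ⁻¹ := by
    rw [le_inv_comm₀ one_pos hκ0]; simpa using hκ1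
  -- monotonicity over ranges
  have step : ∀ d j, 1 ≤ j → j + d ≤ M → b j ≤ b (j + d) ∧ cnf (j + d) ≤ cnf j := by
    intro d
    induction d with
    | zero => intro j _ _; simp
    | succ n ih =>
      intro j h1 h2
      have hmem : j + n ∈ Finset.Icc 1 (M - 1) := Finset.mem_Icc.mpr ⟨by omega, by omega⟩
      have hb := hb_mono _ hmem
      have hc := (hcnf_mono _ hmem).2
      have hih := ih j h1 (by omega)
      have heq : j + (n + 1) = (j + n) + 1 := by omega
      rw [heq]
      exact ⟨le_trans hih.1 hb, le_trans hc hih.2⟩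
  have hb_le : ∀ j k, 1 ≤ j → j ≤ k → k ≤ M → b j ≤ b k := by
    intro j k h1 hjk hkM
    have := (step (k - j) j h1 (by omega)).1
    rwa [show j + (k - j) = k by omega] at this
  have hcnf_le : ∀ j k, 1 ≤ j → j ≤ k → k ≤ M → cnf k ≤ cnf j := by
    intro j k h1 hjk hkM
    have := (step (k - j) j h1 (by omega)).2
    rwa [show j + (k - j) = k by omega] at this
  have hb_nonneg : ∀ j ∈ Finset.Icc 1 M, 0 ≤ b j :=
    fun j hj => le_trans (abs_nonneg _) (hbias j hj)
  intro i hi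
  rw [Finset.mem_Icc] at hi hihat_mem
  rcases le_or_gt i ihat with hle | hlt
  · -- i ≤ ihat : use the common point
    obtain ⟨x, hx⟩ := hihat_nonempty
    rw [Set.mem_iInter₂] at hx
    have hxi := hx i (Finset.mem_Icc.mpr ⟨hi.1, hle⟩)
    have hxh := hx ihat (Finset.mem_Icc.mpr ⟨hihat_mem.1, le_refl _⟩)
    rw [Set.mem_Icc] at hxi hxh
    have hcc : cnf ihat ≤ cnf i := hcnf_le i ihat hi.1 hle hihat_mem.2
    have h1 := abs_le.mp (hbias i (Finset.mem_Icc.mpr hi))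
    have h2 := abs_le.mp (hconf i (Finset.mem_Icc.mpr hi))
    have hci : 0 ≤ cnf i := hcnf_nonneg i (Finset.mem_Icc.mpr hi)
    have hbi : 0 ≤ b i := hb_nonneg i (Finset.mem_Icc.mpr hi)
    rw [abs_le]
    constructor <;> nlinarith [hxi.1, hxi.2, hxh.1, hxh.2, h1.1, h1.2, h2.1, h2.2]
  · -- ihat < i : maximality forces bias > confidence somewhere below ihat + 1
    set k := ihat + 1 with hk
    have hkM : k ≤ M := by omega
    obtain ⟨j, hjmem, hj⟩ : ∃ j ∈ Finset.Icc 1 k, cnf j < b j := by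
      by_contra h
      push_neg at h
      have : (⋂ j ∈ Finset.Icc 1 k,
          Set.Icc (θhat j - 2 * cnf j) (θhat j + 2 * cnf j)).Nonempty := by
        refine ⟨θstar, Set.mem_iInter₂.mpr fun j hj => ?_⟩
        have hjM : j ∈ Finset.Icc 1 M := by
          rw [Finset.mem_Icc] at hj ⊢; omega
        have h1 := abs_le.mp (hbias j hjM)
        have h2 := abs_le.mp (hconf j hjM)
        have h3 := h j hj
        rw [Set.mem_Icc]; constructor <;> linarith [h1.1, h1.2, h2.1, h2.2]
      have := hihat_max k (Finset.mem_Icc.mpr ⟨by omega, hkM⟩) this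
      omega
    rw [Finset.mem_Icc] at hjmem
    have hjM : j ∈ Finset.Icc 1 M := Finset.mem_Icc.mpr ⟨hjmem.1, by omega⟩
    -- κ * cnf ihat ≤ cnf j
    have hkey : κ * cnf ihat ≤ cnf j := by
      rcases le_or_gt j ihat with h | h
      · have := hcnf_le j ihat hjmem.1 h hihat_mem.2
        have hch : 0 ≤ cnf ihat := hcnf_nonneg ihat (Finset.mem_Icc.mpr hihat_mem)
        nlinarith
      · have hjk : j = ihat + 1 := by omega
        have := (hcnf_mono ihat (Finset.mem_Icc.mpr ⟨hihat_mem.1, by omega⟩)).1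
        rw [hjk]; exact this
    have hbji : b j ≤ b i := hb_le j i hjmem.1 (by omega) hi.2
    have hbhi : b ihat ≤ b i := hb_le ihat i hihat_mem.1 (by omega) hi.2
    have h1 := abs_le.mp (hbias ihat (Finset.mem_Icc.mpr hihat_mem))
    have h2 := abs_le.mp (hconf ihat (Finset.mem_Icc.mpr hihat_mem))
    have hci : 0 ≤ cnf i := hcnf_nonneg i (Finset.mem_Icc.mpr hi)
    have hbi : 0 ≤ b i := hb_nonneg i (Finset.mem_Icc.mpr hi)
    -- cnf ihat ≤ κ⁻¹ * b i
    have hch : cnf ihat ≤ κ⁻¹ * b i := by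
      rw [← le_div_iff₀' hκ0] at hkey
      calc cnf ihat ≤ cnf j / κ := hkey
        _ ≤ b i / κ := by gcongr; linarith
        _ = κ⁻¹ * b i := by rw [div_eq_inv_mul]
    rw [abs_le]
    constructor <;> nlinarith [h1.1, h1.2, h2.1, h2.2]
end

section
/- Let M ≥ 1, θ* ∈ ℝ, and θ̂, θ̄, b, cnf : {1,…,M} → ℝ satisfy: |θ̄(i) − θ*| ≤ b(i), |θ̂(i) − θ̄(i)| ≤ cnf(i), cnf(i) ≥ 0 for all i, b monotonically nondecreasing, cnf monotonically nonincreasing, and b(1) ≤ cnf(1). Define I(i) := [θ̂(i) − 2cnf(i), θ̂(i) + 2cnf(i)], î := max{ i : ⋂_{j=1}^{i} I(j) ≠ ∅ }, and ĩ := max{ i : b(i) ≤ cnf(i) }. Then: (a) θ* ∈ I(i) for every i ≤ ĩ; (b) î ≥ ĩ; and (c) |θ̂(î) − θ*| ≤ 6·cnf(ĩ). -/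
/-- **First step of the SLOPE oracle-inequality proof.**
With a valid nondecreasing bias bound `b`, a valid nonincreasing nonnegative confidence
bound `cnf`, and `b 1 ≤ cnf 1`, letting `ihat` be the Lepski index (largest index whose
prefix of intervals `I(j) = [θhat j − 2 cnf j, θhat j + 2 cnf j]` has a common point) and
`itilde` the largest index with `b i ≤ cnf i`, we have: (a) `θstar ∈ I i` for every
`i ≤ itilde`; (b) `itilde ≤ ihat`; (c) `|θhat ihat − θstar| ≤ 6 cnf itilde`. -/
theorem slope_first_step
    (M : ℕ) (hM : 1 ≤ M) (θstar : ℝ) (θhat θbar b cnf : ℕ → ℝ)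
    (hbias : ∀ i ∈ Finset.Icc 1 M, |θbar i - θstar| ≤ b i)
    (hconf : ∀ i ∈ Finset.Icc 1 M, |θhat i - θbar i| ≤ cnf i)
    (hcnf_nonneg : ∀ i ∈ Finset.Icc 1 M, 0 ≤ cnf i)
    (hb_mono : ∀ i ∈ Finset.Icc 1 (M - 1), b i ≤ b (i + 1))
    (hcnf_mono : ∀ i ∈ Finset.Icc 1 (M - 1), cnf (i + 1) ≤ cnf i)
    (hb1 : b 1 ≤ cnf 1)
    (ihat : ℕ) (hihat_mem : ihat ∈ Finset.Icc 1 M)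
    (hihat_nonempty :
      (⋂ j ∈ Finset.Icc 1 ihat,
        Set.Icc (θhat j - 2 * cnf j) (θhat j + 2 * cnf j)).Nonempty)
    (hihat_max : ∀ i ∈ Finset.Icc 1 M,
      (⋂ j ∈ Finset.Icc 1 i,
        Set.Icc (θhat j - 2 * cnf j) (θhat j + 2 * cnf j)).Nonempty → i ≤ ihat)
    (itilde : ℕ) (hitilde_mem : itilde ∈ Finset.Icc 1 M)
    (hitilde_prop : b itilde ≤ cnf itilde)
    (hitilde_max : ∀ i ∈ Finset.Icc 1 M, b i ≤ cnf i → i ≤ itilde) :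
    (∀ i ∈ Finset.Icc 1 M, i ≤ itilde →
        θstar ∈ Set.Icc (θhat i - 2 * cnf i) (θhat i + 2 * cnf i)) ∧
      itilde ≤ ihat ∧
      |θhat ihat - θstar| ≤ 6 * cnf itilde := by

  simp only [Finset.mem_Icc] at hihat_mem hitilde_mem
  -- monotonicity over ranges
  have hmono : ∀ i j, 1 ≤ i → i ≤ j → j ≤ M → b i ≤ b j ∧ cnf j ≤ cnf i := by
    intro i j hi hij hjM
    induction j with
    | zero => omega
    | succ k ih =>
      rcases Nat.lt_or_ge i (k+1) with h | h
      · have hk : i ≤ k := by omega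
        have hkM : k ≤ M := by omega
        obtain ⟨h1, h2⟩ := ih hk hkM
        have hkmem : k ∈ Finset.Icc 1 (M-1) := by
          simp only [Finset.mem_Icc]; omega
        exact ⟨h1.trans (hb_mono k hkmem), (hcnf_mono k hkmem).trans h2⟩
      · have : i = k+1 := by omega
        subst this; exact ⟨le_rfl, le_rfl⟩
  -- part (a)
  have parta : ∀ i ∈ Finset.Icc 1 M, i ≤ itilde →
      θstar ∈ Set.Icc (θhat i - 2 * cnf i) (θhat i + 2 * cnf i) := by
    intro i hi hle
    simp only [Finset.mem_Icc] at hi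
    have hbi : b i ≤ cnf i := by
      obtain ⟨h1, h2⟩ := hmono i itilde hi.1 hle hitilde_mem.2
      exact h1.trans (hitilde_prop.trans h2)
    have hi' : i ∈ Finset.Icc 1 M := by simp only [Finset.mem_Icc]; exact hi
    have h3 := hbias i hi'
    have h4 := hconf i hi'
    have : |θhat i - θstar| ≤ 2 * cnf i := by
      calc |θhat i - θstar| ≤ |θhat i - θbar i| + |θbar i - θstar| := by
            have := abs_sub_le (θhat i) (θbar i) θstar; linarith
        _ ≤ cnf i + b i := by linarith
        _ ≤ 2 * cnf i := by linarith
    rw [abs_sub_le_iff] at this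
    constructor <;> linarith [this.1, this.2]
  -- part (b)
  have partb : itilde ≤ ihat := by
    apply hihat_max itilde (by simp only [Finset.mem_Icc]; exact hitilde_mem)
    refine ⟨θstar, ?_⟩
    simp only [Set.mem_iInter]
    intro j hj
    simp only [Finset.mem_Icc] at hj
    exact parta j (by simp only [Finset.mem_Icc]; omega) hj.2
  refine ⟨parta, partb, ?_⟩
  -- part (c)
  obtain ⟨x, hx⟩ := hihat_nonempty
  simp only [Set.mem_iInter] at hx
  have hx1 : x ∈ Set.Icc (θhat ihat - 2 * cnf ihat) (θhat ihat + 2 * cnf ihat) :=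
    hx ihat (by simp only [Finset.mem_Icc]; omega)
  have hx2 : x ∈ Set.Icc (θhat itilde - 2 * cnf itilde) (θhat itilde + 2 * cnf itilde) :=
    hx itilde (by simp only [Finset.mem_Icc]; omega)
  have hcc : cnf ihat ≤ cnf itilde :=
    (hmono itilde ihat hitilde_mem.1 partb hihat_mem.2).2
  have hts : |θhat itilde - θstar| ≤ 2 * cnf itilde := by
    have := parta itilde (by simp only [Finset.mem_Icc]; exact hitilde_mem) le_rfl
    simp only [Set.mem_Icc] at this
    rw [abs_sub_le_iff]; constructor <;> linarith [this.1, this.2]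
    
  simp only [Set.mem_Icc] at hx1 hx2
  rw [abs_sub_le_iff] at hts ⊢
  constructor <;> [skip; skip] <;>
    first
      | linarith [hx1.1, hx1.2, hx2.1, hx2.2, hts.1, hts.2]
end

section
/- Let M ≥ 1, κ ∈ (0,1], and b, cnf : {1,…,M} → ℝ satisfy: b nonnegative and monotonically nondecreasing, cnf nonnegative with κ·cnf(i) ≤ cnf(i+1) ≤ cnf(i) for all i ∈ {1,…,M−1}, and b(1) ≤ cnf(1). Define ĩ := max{ i : b(i) ≤ cnf(i) }. Then cnf(ĩ) ≤ (1 + κ⁻¹) · min_{i ∈ {1,…,M}} ( b(i) + cnf(i) ). -/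
private lemma mono_chain {M : ℕ} {f : ℕ → ℝ}
    (h : ∀ i ∈ Finset.Icc 1 (M - 1), f i ≤ f (i + 1)) :
    ∀ i j, 1 ≤ i → i ≤ j → j ≤ M → f i ≤ f j := by
  intro i j hi hij hj
  induction j with
  | zero => omega
  | succ k ih =>
    rcases Nat.lt_or_ge i (k+1) with h' | h'
    · have hk : k ≤ M := by omega
      have := h k (by simp [Finset.mem_Icc]; omega)
      exact le_trans (ih (by omega) (by omega)) this
    · have : i = k + 1 := by omega
      subst this; rfl

/-- **Second step of the SLOPE oracle-inequality proof.**
For a nonnegative nondecreasing bias bound `b` and a nonnegative confidence bound `cnf`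
with geometric decay constant `κ ∈ (0,1]` (i.e. `κ * cnf i ≤ cnf (i+1) ≤ cnf i`), and
`b 1 ≤ cnf 1`, the confidence width at the bias-variance balancing index
`itilde = max { i : b i ≤ cnf i }` satisfies
`cnf itilde ≤ (1 + κ⁻¹) * min_i (b i + cnf i)`. -/
theorem slope_second_step
    (M : ℕ) (hM : 1 ≤ M) (κ : ℝ) (hκ0 : 0 < κ) (hκ1 : κ ≤ 1)
    (b cnf : ℕ → ℝ)
    (hb_nonneg : ∀ i ∈ Finset.Icc 1 M, 0 ≤ b i)
    (hb_mono : ∀ i ∈ Finset.Icc 1 (M - 1), b i ≤ b (i + 1))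
    (hcnf_nonneg : ∀ i ∈ Finset.Icc 1 M, 0 ≤ cnf i)
    (hcnf_mono : ∀ i ∈ Finset.Icc 1 (M - 1),
      κ * cnf i ≤ cnf (i + 1) ∧ cnf (i + 1) ≤ cnf i)
    (hb1 : b 1 ≤ cnf 1)
    (itilde : ℕ) (hitilde_mem : itilde ∈ Finset.Icc 1 M)
    (hitilde_prop : b itilde ≤ cnf itilde)
    (hitilde_max : ∀ i ∈ Finset.Icc 1 M, b i ≤ cnf i → i ≤ itilde) :
    ∀ i ∈ Finset.Icc 1 M, cnf itilde ≤ (1 + κ⁻¹) * (b i + cnf i) := by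
  intro i hi
  simp only [Finset.mem_Icc] at hi hitilde_mem
  have hκinv : (1:ℝ) ≤ κ⁻¹ := by
    rw [le_inv_comm₀ one_pos hκ0]; simpa using hκ1
  have hone : (1:ℝ) ≤ 1 + κ⁻¹ := by linarith
  have hbi : 0 ≤ b i := hb_nonneg i (by simp [Finset.mem_Icc]; omega)
  have hci : 0 ≤ cnf i := hcnf_nonneg i (by simp [Finset.mem_Icc]; omega)
  rcases le_or_gt i itilde with hle | hlt
  · -- cnf itilde ≤ cnf i
    have hmono : cnf itilde ≤ cnf i := by
      have h := mono_chain (M := M) (f := fun j => -cnf j) (by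
        intro j hj
        simpa using neg_le_neg ((hcnf_mono j hj).2)) i itilde hi.1 hle hitilde_mem.2
      simpa using neg_le_neg h
    calc cnf itilde ≤ cnf i := hmono
      _ ≤ 1 * (b i + cnf i) := by nlinarith
      _ ≤ (1 + κ⁻¹) * (b i + cnf i) := by nlinarith
  · -- itilde < i, so itilde + 1 ≤ i ≤ M
    have hs : itilde + 1 ≤ M := by omega
    have hnot : ¬ b (itilde + 1) ≤ cnf (itilde + 1) := by
      intro h
      have := hitilde_max (itilde + 1) (by simp [Finset.mem_Icc]; omega) h
      omega
    push_neg at hnot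
    have hdec := hcnf_mono itilde (by simp [Finset.mem_Icc]; omega)
    have hmonob : b (itilde + 1) ≤ b i :=
      mono_chain (M := M) (f := b) hb_mono (itilde + 1) i (by omega) (by omega) hi.2
    -- κ * cnf itilde ≤ cnf (itilde+1) < b (itilde+1) ≤ b i
    have : κ * cnf itilde ≤ b i := le_trans hdec.1 (le_trans hnot.le hmonob)
    have hc : cnf itilde ≤ κ⁻¹ * b i := by
      rw [inv_mul_eq_div, le_div_iff₀ hκ0]
      linarith [this]
    calc cnf itilde ≤ κ⁻¹ * b i := hc
      _ ≤ (1 + κ⁻¹) * (b i + cnf i) := by nlinarith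
end

section
/- Let (Ω, F, μ) be a probability space, γ₀ ∈ (0, 1/2], h ∈ (0, γ₀], and L ≥ 0. Let t : Ω → ℝ be measurable with t(ω) ∈ [γ₀, 1 − γ₀] for all ω, and let r : Ω × [0,1] → [0,1] be jointly measurable such that for every ω the map a ↦ r(ω, a) is L-Lipschitz. On Ω × [0,1] equipped with μ ⊗ Unif([0,1]), define Y(ω, a) := (2h)⁻¹ · 1{|t(ω) − a| ≤ h} · r(ω, a). Then | E[Y] − E_μ[ r(ω, t(ω)) ] | ≤ L·h. -/
open MeasureTheory

/-- **Bias bound for the boxcar-kernel off-policy estimator with uniform logging.**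
For a target-policy action `t ω ∈ [γ₀, 1−γ₀]`, rewards `r ω · ∈ [0,1]` that are
`L`-Lipschitz in the action, bandwidth `h ∈ (0, γ₀]`, and
`Y (ω,a) = (2h)⁻¹ 1{|t ω − a| ≤ h} r ω a` on `Ω × [0,1]` with the product of `μ` and
the uniform measure on `[0,1]`: `|E[Y] − E_μ[r ω (t ω)]| ≤ L h`. -/
theorem boxcar_bias_bound_uniform_logging
    {Ω : Type*} [MeasurableSpace Ω] (μ : Measure Ω) [IsProbabilityMeasure μ]
    (γ₀ h L : ℝ) (hγ₀0 : 0 < γ₀) (hγ₀2 : γ₀ ≤ 1 / 2) (hh0 : 0 < h) (hhγ₀ : h ≤ γ₀)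
    (hL : 0 ≤ L)
    (t : Ω → ℝ) (ht : Measurable t) (htr : ∀ ω, t ω ∈ Set.Icc γ₀ (1 - γ₀))
    (r : Ω → ℝ → ℝ) (hr : Measurable (Function.uncurry r))
    (hrb : ∀ ω a, r ω a ∈ Set.Icc (0 : ℝ) 1)
    (hrlip : ∀ ω, ∀ a ∈ Set.Icc (0 : ℝ) 1, ∀ a' ∈ Set.Icc (0 : ℝ) 1,
      |r ω a - r ω a'| ≤ L * |a - a'|) :
    |(∫ p : Ω × ℝ, (if |t p.1 - p.2| ≤ h then r p.1 p.2 / (2 * h) else 0)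
        ∂(μ.prod (volume.restrict (Set.Icc 0 1)))) -
      ∫ ω, r ω (t ω) ∂μ| ≤ L * h := by
  set ν := volume.restrict (Set.Icc (0:ℝ) 1) with hν
  have h2h : (0:ℝ) < 2 * h := by linarith
  set f : Ω × ℝ → ℝ := fun p => if |t p.1 - p.2| ≤ h then r p.1 p.2 / (2 * h) else 0 with hf
  -- measurability of f
  have hmset : MeasurableSet {p : Ω × ℝ | |t p.1 - p.2| ≤ h} := by
    apply measurableSet_le
    · exact ((ht.comp measurable_fst).sub measurable_snd).abs
    · exact measurable_const
  have hfm : Measurable f := by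
    apply Measurable.ite hmset
    · exact hr.div_const _
    · exact measurable_const
  have hSsub : ∀ ω, Set.Icc (t ω - h) (t ω + h) ⊆ Set.Icc (0:ℝ) 1 := by
    intro ω
    obtain ⟨h1, h2⟩ := htr ω
    apply Set.Icc_subset_Icc <;> linarith
  -- integrability of f
  have hfint : Integrable f (μ.prod ν) := by
    apply Integrable.mono' (integrable_const (1 / (2*h))) hfm.aestronglyMeasurable
    filter_upwards with p
    simp only [hf]
    rw [Real.norm_eq_abs]
    split
    · rw [abs_div, abs_of_pos h2h, div_le_div_iff_of_pos_right h2h, abs_le]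
      have := hrb p.1 p.2
      constructor <;> linarith [this.1, this.2]
    · simp [abs_nonneg, le_div_iff₀ h2h]; positivity
  rw [integral_prod _ hfint]
  -- inner integral computation
  have hinner : ∀ ω, (∫ a, f (ω, a) ∂ν) = ∫ a in Set.Icc (t ω - h) (t ω + h), r ω a / (2*h) := by
    intro ω
    have : ∀ a, f (ω, a) = Set.indicator (Set.Icc (t ω - h) (t ω + h))
        (fun a => r ω a / (2*h)) a := by
      intro a
      simp only [hf, Set.indicator_apply, Set.mem_Icc]
      congr 1
      simp [abs_sub_le_iff]
      constructor
      · rintro ⟨h1, h2⟩; constructor <;> linarith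
      · rintro ⟨h1, h2⟩; constructor <;> linarith
    simp_rw [this]
    rw [hν, setIntegral_indicator measurableSet_Icc,
      Set.inter_eq_self_of_subset_right (hSsub ω)]
  -- pointwise bound on the inner integral minus target
  have hbound : ∀ ω, |(∫ a, f (ω, a) ∂ν) - r ω (t ω)| ≤ L * h := by
    intro ω
    have htω : t ω ∈ Set.Icc (0:ℝ) 1 := by
      obtain ⟨h1, h2⟩ := htr ω
      constructor <;> [linarith; linarith]
    have hvol : (volume (Set.Icc (t ω - h) (t ω + h))).toReal = 2 * h := by
      rw [Real.volume_Icc, ENNReal.toReal_ofReal (by linarith)]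
      ring
    have hconst : r ω (t ω) = ∫ a in Set.Icc (t ω - h) (t ω + h), r ω (t ω) / (2*h) := by
      rw [setIntegral_const, measureReal_def, hvol, smul_eq_mul]
      field_simp
    have hintS : Integrable (fun a => r ω a / (2*h))
        (volume.restrict (Set.Icc (t ω - h) (t ω + h))) := by
      apply Integrable.mono' (integrable_const (1/(2*h)))
      · exact ((hr.comp (measurable_const.prodMk measurable_id)).div_const _).aestronglyMeasurable
      · filter_upwards with a
        rw [Real.norm_eq_abs, abs_div, abs_of_pos h2h, div_le_div_iff_of_pos_right h2h, abs_le]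
        have := hrb ω a
        constructor <;> linarith [this.1, this.2]
    have hconstint : Integrable (fun _ : ℝ => r ω (t ω) / (2*h))
        (volume.restrict (Set.Icc (t ω - h) (t ω + h))) :=
      integrableOn_const (by rw [Real.volume_Icc]; exact ENNReal.ofReal_ne_top)
    rw [hinner, hconst, ← integral_sub hintS hconstint]
    rw [← Real.norm_eq_abs]
    calc ‖∫ a in Set.Icc (t ω - h) (t ω + h), (r ω a / (2*h) - r ω (t ω) / (2*h))‖
        ≤ (L / 2) * (volume (Set.Icc (t ω - h) (t ω + h))).toReal := by
          apply norm_setIntegral_le_of_norm_le_const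
          · rw [Real.volume_Icc]; exact ENNReal.ofReal_lt_top
          · intro a ha
            rw [Real.norm_eq_abs, div_sub_div_same, abs_div, abs_of_pos h2h]
            rw [div_le_iff₀ h2h]
            calc |r ω a - r ω (t ω)| ≤ L * |a - t ω| := hrlip ω a (hSsub ω ha) (t ω) htω
              _ ≤ L * h := by
                  apply mul_le_mul_of_nonneg_left _ hL
                  rw [abs_le]
                  obtain ⟨h1, h2⟩ := ha
                  constructor <;> linarith
              _ = L / 2 * (2 * h) := by ring
      _ = L * h := by rw [hvol]; ring
  -- outer bound
  have hrtm : Measurable fun ω => r ω (t ω) :=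
    hr.comp (measurable_id.prodMk ht)
  have hgint : Integrable (fun ω => ∫ a, f (ω, a) ∂ν) μ := hfint.integral_prod_left
  have hrtint : Integrable (fun ω => r ω (t ω)) μ := by
    apply Integrable.mono' (integrable_const 1) hrtm.aestronglyMeasurable
    filter_upwards with ω
    rw [Real.norm_eq_abs, abs_le]
    have := hrb ω (t ω)
    constructor <;> linarith [this.1, this.2]
  rw [← integral_sub hgint hrtint, ← Real.norm_eq_abs]
  calc ‖∫ ω, ((∫ a, f (ω, a) ∂ν) - r ω (t ω)) ∂μ‖
      ≤ (L * h) * (μ Set.univ).toReal := by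
        apply norm_integral_le_of_norm_le_const
        filter_upwards with ω
        rw [Real.norm_eq_abs]
        exact hbound ω
    _ = L * h := by simp
end

section
/- Let (Ω, F, μ) be a probability space, γ₀ ∈ (0, 1/2], h ∈ (0, γ₀], and p_min ∈ (0, 1]. Let t : Ω → ℝ be measurable with t(ω) ∈ [γ₀, 1 − γ₀], let r : Ω × [0,1] → [0,1] be jointly measurable, and let π : Ω × [0,1] → ℝ be jointly measurable with π(ω, a) ≥ p_min for all (ω,a) and ∫₀¹ π(ω, a) da = 1 for every ω. Let P be the probability measure on Ω × [0,1] defined by P(f) = ∫_Ω ∫₀¹ f(ω,a)·π(ω,a) da dμ(ω), and define Y(ω,a) := (2h·π(ω,a))⁻¹ · 1{|t(ω) − a| ≤ h} · r(ω,a). Then 0 ≤ Y ≤ 1/(2h·p_min) P-almost surely, and Var_P(Y) ≤ 1/(2h·p_min). -/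
open MeasureTheory

/-- **Variance and range bounds for the boxcar-kernel off-policy estimator under a
non-uniform logging policy.** The logged-data distribution `P` on `Ω × [0,1]` has
density `π(ω,a) ≥ p_min` (in the action) with `∫₀¹ π(ω,a) da = 1`, and
`Y (ω,a) = (2 h π(ω,a))⁻¹ 1{|t ω − a| ≤ h} r ω a` is the single-sample
inverse-propensity-weighted kernel estimate.  Then `0 ≤ Y ≤ 1/(2 h p_min)` `P`-a.s.
and `Var_P(Y) ≤ 1/(2 h p_min)`. -/
theorem boxcar_variance_range_nonuniform_logging
    {Ω : Type*} [MeasurableSpace Ω] (μ : Measure Ω) [IsProbabilityMeasure μ]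
    (γ₀ h pmin : ℝ) (hγ₀0 : 0 < γ₀) (hγ₀2 : γ₀ ≤ 1 / 2) (hh0 : 0 < h) (hhγ₀ : h ≤ γ₀)
    (hpmin0 : 0 < pmin) (hpmin1 : pmin ≤ 1)
    (t : Ω → ℝ) (ht : Measurable t) (htr : ∀ ω, t ω ∈ Set.Icc γ₀ (1 - γ₀))
    (r : Ω → ℝ → ℝ) (hr : Measurable (Function.uncurry r))
    (hrb : ∀ ω a, r ω a ∈ Set.Icc (0 : ℝ) 1)
    (π : Ω → ℝ → ℝ) (hπ : Measurable (Function.uncurry π))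
    (hπlb : ∀ ω a, pmin ≤ π ω a)
    (hπint : ∀ ω, ∫ a in Set.Icc (0 : ℝ) 1, π ω a = 1)
    (P : Measure (Ω × ℝ))
    (hP : P = (μ.prod (volume.restrict (Set.Icc 0 1))).withDensity
      (fun p => ENNReal.ofReal (π p.1 p.2))) :
    (∀ᵐ p ∂P,
        0 ≤ (if |t p.1 - p.2| ≤ h then r p.1 p.2 / (2 * h * π p.1 p.2) else 0) ∧
        (if |t p.1 - p.2| ≤ h then r p.1 p.2 / (2 * h * π p.1 p.2) else 0) ≤
          1 / (2 * h * pmin)) ∧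
      ProbabilityTheory.variance
        (fun p : Ω × ℝ =>
          if |t p.1 - p.2| ≤ h then r p.1 p.2 / (2 * h * π p.1 p.2) else 0) P ≤
        1 / (2 * h * pmin) := by
  set ν : Measure (Ω × ℝ) := μ.prod (volume.restrict (Set.Icc 0 1)) with hν
  set X : Ω × ℝ → ℝ :=
    fun p => if |t p.1 - p.2| ≤ h then r p.1 p.2 / (2 * h * π p.1 p.2) else 0 with hXdef
  set M : ℝ := 1 / (2 * h * pmin) with hMdef
  have hπpos : ∀ ω a, 0 < π ω a := fun ω a => lt_of_lt_of_le hpmin0 (hπlb ω a)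
  have hXnn : ∀ p, 0 ≤ X p := by
    intro p
    by_cases hc : |t p.1 - p.2| ≤ h
    · simp only [hXdef, if_pos hc]
      exact div_nonneg (hrb p.1 p.2).1 (by nlinarith [hπpos p.1 p.2])
    · simp [hXdef, hc]
  have hXub : ∀ p, X p ≤ M := by
    intro p
    by_cases hc : |t p.1 - p.2| ≤ h
    · simp only [hXdef, hMdef, if_pos hc]
      exact div_le_div₀ zero_le_one (hrb p.1 p.2).2 (by positivity)
        (by nlinarith [hπlb p.1 p.2])
    · simp only [hXdef, hMdef, if_neg hc]
      positivity
  have hπm : Measurable fun p : Ω × ℝ => π p.1 p.2 := hπ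
  have hrm : Measurable fun p : Ω × ℝ => r p.1 p.2 := hr
  have hSm : MeasurableSet {p : Ω × ℝ | |t p.1 - p.2| ≤ h} :=
    measurableSet_le ((ht.comp measurable_fst).sub measurable_snd).abs measurable_const
  have hXm : Measurable X :=
    Measurable.ite hSm (hrm.div (hπm.const_mul (2 * h))) measurable_const
  haveI : IsFiniteMeasure (volume.restrict (Set.Icc (0:ℝ) 1)) :=
    ⟨by rw [Measure.restrict_apply_univ]; simp [Real.volume_Icc]⟩
  -- P is a probability measure
  have hπint' : ∀ ω, Integrable (π ω) (volume.restrict (Set.Icc (0:ℝ) 1)) := fun ω =>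
    integrable_of_integral_eq_one (hπint ω)
  have hinner : ∀ ω, ∫⁻ a in Set.Icc (0:ℝ) 1, ENNReal.ofReal (π ω a) = 1 := by
    intro ω
    rw [← ofReal_integral_eq_lintegral_ofReal (hπint' ω)
      (Filter.Eventually.of_forall fun a => le_trans hpmin0.le (hπlb ω a)), hπint ω,
      ENNReal.ofReal_one]
  haveI hPprob : IsProbabilityMeasure P := by
    constructor
    rw [hP, withDensity_apply _ MeasurableSet.univ, Measure.restrict_univ, hν,
      lintegral_prod _ (hπm.ennreal_ofReal.aemeasurable)]
    simp [hinner]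
  -- integrability of X
  have hXbd : ∀ᵐ p ∂P, ‖X p‖ ≤ M := Filter.Eventually.of_forall fun p => by
    rw [Real.norm_eq_abs, abs_of_nonneg (hXnn p)]; exact hXub p
  have hX2 : MemLp X 2 P := MemLp.of_bound hXm.aestronglyMeasurable _ hXbd
  have hXint : Integrable X P :=
    memLp_one_iff_integrable.1 (hX2.mono_exponent one_le_two)
  -- compute the mean bound
  have hIeq : ∫ p, X p ∂P = ∫ p, (π p.1 p.2).toNNReal • X p ∂ν := by
    rw [hP]
    exact integral_withDensity_eq_integral_smul (measurable_real_toNNReal.comp hπm) X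
  set g : Ω × ℝ → ℝ := fun p => if |t p.1 - p.2| ≤ h then r p.1 p.2 / (2 * h) else 0
    with hgdef
  have hsmul : ∀ p, (π p.1 p.2).toNNReal • X p = g p := by
    intro p
    have hp := hπpos p.1 p.2
    simp only [NNReal.smul_def, smul_eq_mul, Real.coe_toNNReal _ hp.le, hXdef, hgdef]
    by_cases hc : |t p.1 - p.2| ≤ h
    · rw [if_pos hc, if_pos hc]
      field_simp
    · simp [hc]
  have hgm : Measurable g :=
    Measurable.ite hSm (hrm.div measurable_const) measurable_const
  have hgnn : ∀ p, 0 ≤ g p := by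
    intro p
    by_cases hc : |t p.1 - p.2| ≤ h
    · simp only [hgdef, if_pos hc]
      exact div_nonneg (hrb p.1 p.2).1 (by positivity)
    · simp [hgdef, hc]
  have hgub : ∀ p, g p ≤ Set.indicator {p : Ω × ℝ | |t p.1 - p.2| ≤ h}
      (fun _ => 1 / (2 * h)) p := by
    intro p
    rw [Set.indicator_apply]
    by_cases hc : |t p.1 - p.2| ≤ h
    · rw [if_pos (show p ∈ {p : Ω × ℝ | |t p.1 - p.2| ≤ h} from hc)]
      simp only [hgdef, if_pos hc]
      exact div_le_div₀ zero_le_one (hrb p.1 p.2).2 (by positivity) le_rfl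
    · rw [if_neg (show p ∉ {p : Ω × ℝ | |t p.1 - p.2| ≤ h} from hc)]
      simp [hgdef, hc]
  have hgint : Integrable g ν := by
    refine memLp_one_iff_integrable.1 (MemLp.of_bound hgm.aestronglyMeasurable (1 / (2 * h))
      (Filter.Eventually.of_forall fun p => ?_))
    rw [Real.norm_eq_abs, abs_of_nonneg (hgnn p)]
    calc g p ≤ _ := hgub p
      _ ≤ 1 / (2 * h) := by
        rw [Set.indicator_apply]
        split
        · exact le_rfl
        · positivity
  have hνS : ν {p : Ω × ℝ | |t p.1 - p.2| ≤ h} ≤ ENNReal.ofReal (2 * h) := by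
    rw [hν, Measure.prod_apply hSm]
    calc ∫⁻ ω, volume.restrict (Set.Icc 0 1)
          (Prod.mk ω ⁻¹' {p : Ω × ℝ | |t p.1 - p.2| ≤ h}) ∂μ
        ≤ ∫⁻ _, ENNReal.ofReal (2 * h) ∂μ := by
          refine lintegral_mono fun ω => ?_
          have hpre : Prod.mk ω ⁻¹' {p : Ω × ℝ | |t p.1 - p.2| ≤ h}
              = Set.Icc (t ω - h) (t ω + h) := by
            ext a
            simp only [Set.mem_preimage, Set.mem_setOf_eq, Set.mem_Icc, abs_le]
            constructor <;> rintro ⟨h1, h2⟩ <;> constructor <;> linarith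
          calc volume.restrict (Set.Icc 0 1)
                (Prod.mk ω ⁻¹' {p : Ω × ℝ | |t p.1 - p.2| ≤ h})
              ≤ volume (Set.Icc (t ω - h) (t ω + h)) := by
                rw [hpre]; exact Measure.restrict_le_self _
            _ = ENNReal.ofReal (2 * h) := by rw [Real.volume_Icc]; ring_nf
      _ = ENNReal.ofReal (2 * h) := by simp
  have hEX1 : ∫ p, X p ∂P ≤ 1 := by
    rw [hIeq]
    calc ∫ p, (π p.1 p.2).toNNReal • X p ∂ν = ∫ p, g p ∂ν := by
          exact integral_congr_ae (Filter.Eventually.of_forall hsmul)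
      _ ≤ ∫ p, Set.indicator {p : Ω × ℝ | |t p.1 - p.2| ≤ h}
            (fun _ => 1 / (2 * h)) p ∂ν := by
          exact integral_mono hgint ((integrable_const _).indicator hSm) hgub
      _ = (ν {p : Ω × ℝ | |t p.1 - p.2| ≤ h}).toReal • (1 / (2 * h)) :=
          integral_indicator_const _ hSm
      _ ≤ (2 * h) * (1 / (2 * h)) := by
          refine mul_le_mul_of_nonneg_right ?_ (by positivity)
          exact ENNReal.toReal_le_of_le_ofReal (by positivity) hνS
      _ = 1 := by field_simp
  refine ⟨Filter.Eventually.of_forall fun p => ⟨hXnn p, hXub p⟩, ?_⟩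
  have hvar := ProbabilityTheory.variance_le_expectation_sq (μ := P) hXm.aestronglyMeasurable
  have hM0 : (0:ℝ) ≤ M := by rw [hMdef]; positivity
  calc ProbabilityTheory.variance X P ≤ ∫ p, (X ^ 2) p ∂P := hvar
    _ ≤ ∫ p, M * X p ∂P := by
        refine integral_mono hX2.integrable_sq (hXint.const_mul _) fun p => ?_
        simp only [Pi.pow_apply]
        nlinarith [hXnn p, hXub p]
    _ = M * ∫ p, X p ∂P := integral_const_mul _ _
    _ ≤ M * 1 := mul_le_mul_of_nonneg_left hEX1 hM0
    _ = M := mul_one _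
end
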